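/- Let R be a finite Frobenius ring with generating character χ, and define the normalized homogeneous weight ω : R → ℂ by ω(r) = 1 − (1/|R^×|) · ∑_{u∈R^×} χ(ru), extended additively to R^n by ω(x_1,…,x_n) = ∑_{i=1}^n ω(x_i). If f : C → C' is a left R-linear isomorphism between codes C, C' ⊆ R^n with ω(f(x)) = ω(x) for all x ∈ C, then f is a global Mon(n,R)-map: there exists a monomial matrix M ∈ Mon(n,R) such that f(x) = x·M for all x ∈ C. -/

import Mathlib

open Matrix
open scoped Classical

noncomputable section

/-- `χ` is a generating character of the finite ring `R`. -/
def IsGeneratingChar {R : Type*} [Ring R] [Fintype R] (χ : AddChar R ℂ) : Prop :=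
  ∀ ψ : AddChar R ℂ, ∃! r : R, ∀ x : R, ψ x = χ (x * r)

/-- Honold's formula for the normalized homogeneous weight on a finite Frobenius ring
with generating character `χ`: `ω(r) = 1 - (1/|R^×|) ∑_{u ∈ R^×} χ(r u)`. -/
def homWeight {R : Type*} [Ring R] [Fintype R] (χ : AddChar R ℂ) (r : R) : ℂ :=
  1 - (1 / (Fintype.card Rˣ : ℂ)) * ∑ u : Rˣ, χ (r * (u : R))

/-- `M ∈ Mon(n,R)`: `M` is a monomial matrix, i.e. has exactly one nonzero entry in each
row and each column, and these nonzero entries are units of `R`. -/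
def IsMonomial {R : Type*} [Ring R] {n : ℕ} (M : Matrix (Fin n) (Fin n) R) : Prop :=
  ∃ (σ : Equiv.Perm (Fin n)) (d : Fin n → Rˣ),
    ∀ i j, M i j = if j = σ i then (d i : R) else 0

/-! ### Auxiliary lemmas -/

/-- Orthogonality computation for a finite family of additive characters. -/
lemma charSumOrtho {G : Type*} [AddCommGroup G] [Fintype G] {ι : Type*}
    (s : Finset ι) (Ψ : ι → AddChar G ℂ) (ψ0 : AddChar G ℂ) :
    ∑ x : G, (∑ a ∈ s, Ψ a x) * ψ0 (-x)
      = ((s.filter fun a => Ψ a = ψ0).card : ℂ) * (Fintype.card G : ℂ) := by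
  calc ∑ x : G, (∑ a ∈ s, Ψ a x) * ψ0 (-x)
      = ∑ a ∈ s, ∑ x : G, (Ψ a - ψ0) x := by
        simp only [Finset.sum_mul]
        rw [Finset.sum_comm]
        exact Finset.sum_congr rfl fun a _ => Finset.sum_congr rfl fun x _ =>
          (AddChar.sub_apply _ _ _).symm
    _ = ∑ a ∈ s, if Ψ a = ψ0 then (Fintype.card G : ℂ) else 0 := by
        refine Finset.sum_congr rfl fun a _ => ?_
        rw [AddChar.sum_eq_ite]
        exact if_congr sub_eq_zero rfl rfl
    _ = ((s.filter fun a => Ψ a = ψ0).card : ℂ) * (Fintype.card G : ℂ) := by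
        rw [← Finset.sum_filter, Finset.sum_const, nsmul_eq_mul]

/-- Matching lemma: if two finite sums of additive characters agree as functions, then any
character occurring in the left-hand sum occurs in the right-hand sum. -/
lemma charMatch {G : Type*} [AddCommGroup G] [Fintype G] {α β : Type*}
    (s : Finset α) (t : Finset β) (Ψ : α → AddChar G ℂ) (Φ : β → AddChar G ℂ)
    (h : ∀ x : G, ∑ a ∈ s, Ψ a x = ∑ b ∈ t, Φ b x) {a0 : α} (ha : a0 ∈ s) :
    ∃ b ∈ t, Φ b = Ψ a0 := by
  by_contra hc
  push_neg at hc
  haveI : Nonempty G := ⟨0⟩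
  have H : ∑ x : G, (∑ a ∈ s, Ψ a x) * Ψ a0 (-x)
      = ∑ x : G, (∑ b ∈ t, Φ b x) * Ψ a0 (-x) :=
    Finset.sum_congr rfl fun x _ => by rw [h x]
  rw [charSumOrtho, charSumOrtho] at H
  have ht : (t.filter fun b => Φ b = Ψ a0) = ∅ :=
    Finset.filter_eq_empty_iff.2 fun b hb => hc b hb
  rw [ht] at H
  simp only [Finset.card_empty, Nat.cast_zero, zero_mul] at H
  have h1 : ((s.filter fun a => Ψ a = Ψ a0).card : ℂ) ≠ 0 :=
    Nat.cast_ne_zero.2 (Finset.card_ne_zero_of_mem (Finset.mem_filter.2 ⟨ha, rfl⟩))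
  have h2 : ((Fintype.card G : ℂ)) ≠ 0 := Nat.cast_ne_zero.2 Fintype.card_ne_zero
  exact (mul_ne_zero h1 h2) H

/-- Cancellation property of a generating character: if `χ(r a) = χ(r b)` for all `r`,
then `a = b`. -/
lemma genCancel {R : Type*} [Ring R] [Fintype R] {χ : AddChar R ℂ}
    (hχ : IsGeneratingChar χ) {a b : R} (h : ∀ r : R, χ (r * a) = χ (r * b)) :
    a = b := by
  obtain ⟨s, -, hu⟩ := hχ (χ.compAddMonoidHom (AddMonoidHom.mulRight a))
  have h1 : a = s := hu a fun x => rfl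
  have h2 : b = s := hu b fun x => h x
  exact h1.trans h2.symm

/-- The additive character `x ↦ χ(F x i * u)` of a module `M`. -/
def coordChar {R : Type*} [Ring R] (χ : AddChar R ℂ) {n : ℕ} {M : Type*}
    [AddCommGroup M] [Module R M] (F : M →ₗ[R] (Fin n → R)) (i : Fin n) (u : R) :
    AddChar M ℂ :=
  χ.compAddMonoidHom ((AddMonoidHom.mulRight u).comp
    ((Pi.evalAddMonoidHom (fun _ => R) i).comp F.toAddMonoidHom))

@[simp] lemma coordChar_apply {R : Type*} [Ring R] (χ : AddChar R ℂ) {n : ℕ}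
    {M : Type*} [AddCommGroup M] [Module R M] (F : M →ₗ[R] (Fin n → R)) (i : Fin n)
    (u : R) (x : M) : coordChar χ F i u x = χ (F x i * u) := rfl

/-- Key induction: equality of unit character sums over sets of coordinates produces an
injective assignment of coordinates together with unit scalings. -/
lemma keyInduction {R : Type*} [Ring R] [Fintype R] {χ : AddChar R ℂ}
    (hχ : IsGeneratingChar χ) {n : ℕ} {M : Type*}
    [AddCommGroup M] [Module R M] [Fintype M] (F G : M →ₗ[R] (Fin n → R)) :
    ∀ T T' : Finset (Fin n),
      (∀ x : M, ∑ i ∈ T, ∑ u : Rˣ, χ (F x i * (u : R))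
          = ∑ j ∈ T', ∑ u : Rˣ, χ (G x j * (u : R))) →
      ∃ (g : Fin n → Fin n) (d : Fin n → Rˣ), Set.InjOn g ↑T ∧ (∀ i ∈ T, g i ∈ T') ∧
        ∀ (x : M), ∀ i ∈ T, F x i = G x (g i) * (d i : R) := by
  intro T
  induction T using Finset.strongInduction with
  | _ T ih =>
    intro T' h
    rcases T.eq_empty_or_nonempty with rfl | ⟨i0, hi0⟩
    · exact ⟨id, fun _ => 1, by simp, by simp, by simp⟩
    -- match the character χ (F x i0 * 1) with one on the right
    have h2 : ∀ x : M, ∑ p ∈ T ×ˢ (Finset.univ : Finset Rˣ), coordChar χ F p.1 (p.2 : R) x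
        = ∑ q ∈ T' ×ˢ (Finset.univ : Finset Rˣ), coordChar χ G q.1 (q.2 : R) x := by
      intro x
      rw [Finset.sum_product, Finset.sum_product]
      simpa using h x
    have ha0 : ((i0, (1 : Rˣ)) : Fin n × Rˣ) ∈ T ×ˢ (Finset.univ : Finset Rˣ) :=
      Finset.mem_product.2 ⟨hi0, Finset.mem_univ _⟩
    obtain ⟨⟨j0, v0⟩, hq, hΦ⟩ := charMatch _ _ _ _ h2 ha0
    have hj0 : j0 ∈ T' := (Finset.mem_product.1 hq).1
    have hpt : ∀ x : M, χ (G x j0 * (v0 : R)) = χ (F x i0) := by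
      intro x
      have := DFunLike.congr_fun hΦ x
      simpa using this
    -- pointwise identification of the linear functionals
    have heq0 : ∀ x : M, F x i0 = G x j0 * (v0 : R) := by
      intro x
      refine genCancel hχ fun r => ?_
      have := hpt (r • x)
      simp only [LinearMap.map_smul, Pi.smul_apply, smul_eq_mul, mul_assoc] at this
      exact this.symm
    -- full unit sums over coordinates i0 and j0 agree
    have hsum0 : ∀ x : M, ∑ u : Rˣ, χ (F x i0 * (u : R)) = ∑ u : Rˣ, χ (G x j0 * (u : R)) := by
      intro x
      calc ∑ u : Rˣ, χ (F x i0 * (u : R))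
          = ∑ u : Rˣ, χ (G x j0 * ((v0 * u : Rˣ) : R)) := by
            refine Finset.sum_congr rfl fun u _ => ?_
            rw [heq0 x, Units.val_mul, mul_assoc]
        _ = ∑ u : Rˣ, χ (G x j0 * (u : R)) :=
            Fintype.sum_equiv (Equiv.mulLeft v0) _ _ fun u => rfl
    have h' : ∀ x : M, ∑ i ∈ T.erase i0, ∑ u : Rˣ, χ (F x i * (u : R))
        = ∑ j ∈ T'.erase j0, ∑ u : Rˣ, χ (G x j * (u : R)) := by
      intro x
      have hx := h x
      rw [← Finset.add_sum_erase _ _ hi0, ← Finset.add_sum_erase _ _ hj0, hsum0 x] at hx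
      exact add_left_cancel hx
    obtain ⟨g', d', hinj, hmem, hval⟩ := ih (T.erase i0) (Finset.erase_ssubset hi0) _ h'
    refine ⟨Function.update g' i0 j0, Function.update d' i0 v0, ?_, ?_, ?_⟩
    · intro a ha b hb hab
      simp only [Finset.mem_coe] at ha hb
      by_cases hai : a = i0 <;> by_cases hbi : b = i0
      · rw [hai, hbi]
      · exfalso
        rw [hai, Function.update_self, Function.update_of_ne hbi] at hab
        have := hmem b (Finset.mem_erase.2 ⟨hbi, hb⟩)
        exact (Finset.mem_erase.1 this).1 hab.symm
      · exfalso
        rw [hbi, Function.update_self, Function.update_of_ne hai] at hab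
        have := hmem a (Finset.mem_erase.2 ⟨hai, ha⟩)
        exact (Finset.mem_erase.1 this).1 hab
      · rw [Function.update_of_ne hai, Function.update_of_ne hbi] at hab
        exact hinj (Finset.mem_coe.2 (Finset.mem_erase.2 ⟨hai, ha⟩))
          (Finset.mem_coe.2 (Finset.mem_erase.2 ⟨hbi, hb⟩)) hab
    · intro i hiT
      by_cases hii : i = i0
      · rw [hii, Function.update_self]; exact hj0
      · rw [Function.update_of_ne hii]
        exact Finset.mem_of_mem_erase (hmem i (Finset.mem_erase.2 ⟨hii, hiT⟩))
    · intro x i hiT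
      by_cases hii : i = i0
      · rw [hii, Function.update_self, Function.update_self]; exact heq0 x
      · rw [Function.update_of_ne hii, Function.update_of_ne hii]
        exact hval x i (Finset.mem_erase.2 ⟨hii, hiT⟩)

/-- **Extension theorem for the homogeneous weight.**  Over a finite Frobenius ring `R`
with generating character `χ`, every left `R`-linear isomorphism `f : C → C'` between
codes in `R^n` preserving the additively extended normalized homogeneous weight is a
global `Mon(n,R)`-map. -/
theorem homogeneous_extension {R : Type*} [Ring R] [Fintype R]
    (χ : AddChar R ℂ) (hχ : IsGeneratingChar χ)
    {n : ℕ} (C C' : Submodule R (Fin n → R)) (f : C ≃ₗ[R] C')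
    (hf : ∀ x : C, ∑ i : Fin n, homWeight χ ((f x : Fin n → R) i) =
      ∑ i : Fin n, homWeight χ ((x : Fin n → R) i)) :
    ∃ M : Matrix (Fin n) (Fin n) R,
      IsMonomial M ∧ ∀ x : C, (f x : Fin n → R) = (x : Fin n → R) ᵥ* M := by
  haveI : Fintype C := Fintype.ofFinite _
  haveI : Nonempty Rˣ := ⟨1⟩
  set F : C →ₗ[R] (Fin n → R) := C'.subtype.comp (f : C →ₗ[R] C') with hF
  set G : C →ₗ[R] (Fin n → R) := C.subtype with hG
  have hcard : (1 / (Fintype.card Rˣ : ℂ)) ≠ 0 :=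
    one_div_ne_zero (Nat.cast_ne_zero.2 Fintype.card_ne_zero)
  have h0 : ∀ x : C, ∑ i : Fin n, ∑ u : Rˣ, χ (F x i * (u : R))
      = ∑ i : Fin n, ∑ u : Rˣ, χ (G x i * (u : R)) := by
    intro x
    have hx := hf x
    simp only [homWeight, Finset.sum_sub_distrib, ← Finset.mul_sum] at hx
    have hx2 := sub_right_injective hx
    exact mul_left_cancel₀ hcard hx2
  obtain ⟨g, d, hinj, -, hval⟩ := keyInduction hχ F G Finset.univ Finset.univ h0
  have hginj : Function.Injective g :=
    Set.injOn_univ.1 (by simpa using hinj)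
  have hgbij : Function.Bijective g := Finite.injective_iff_bijective.1 hginj
  set τ : Fin n ≃ Fin n := Equiv.ofBijective g hgbij with hτdef
  have hτ : ∀ i, τ.symm (g i) = i := fun i => τ.symm_apply_apply i
  refine ⟨Matrix.of fun a b => if b = τ.symm a then (d (τ.symm a) : R) else 0,
    ⟨τ.symm, fun a => d (τ.symm a), fun i j => rfl⟩, ?_⟩
  intro x
  funext i
  have hv := hval x i (Finset.mem_univ i)
  have hs : (((x : Fin n → R)) ᵥ* Matrix.of fun a b =>
      if b = τ.symm a then (d (τ.symm a) : R) else 0) i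
      = (x : Fin n → R) (g i) * (d i : R) := by
    rw [Matrix.vecMul, dotProduct]
    rw [Finset.sum_eq_single (g i)]
    · simp [hτ i]
    · intro b _ hb
      have : i ≠ τ.symm b := by
        intro hi
        apply hb
        rw [hi]
        exact (τ.apply_symm_apply b).symm
      simp only [Matrix.of_apply]
      rw [if_neg this, mul_zero]
    · intro hgi
      exact absurd (Finset.mem_univ _) hgi
  rw [hs]
  exact hv

end
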